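/- Let R be a commutative ℚ-algebra and let f : F → G be a homomorphism of formal group laws over R whose linear coefficient is zero. Then f = 0. -/

import Mathlib

namespace FGL

variable {R : Type*} [CommRing R]

/-- `subst2 F a b` is the substitution `F(a,b)` of the power series `a`, `b`
(with zero constant term) into the two-variable power series `F`. -/
noncomputable def subst2 {σ : Type*} (F : MvPowerSeries (Fin 2) R)
    (a b : MvPowerSeries σ R) : MvPowerSeries σ R :=
  fun d =>
    ∑ ij ∈ Finset.range ((d.sum fun _ k => k) + 1) ×ˢ
        Finset.range ((d.sum fun _ k => k) + 1),
      MvPowerSeries.coeff (Finsupp.single 0 ij.1 + Finsupp.single 1 ij.2) F *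
        MvPowerSeries.coeff d (a ^ ij.1 * b ^ ij.2)

/-- `subst1 f G` is the substitution `f(G)` of the power series `G`
(with zero constant term) into the one-variable power series `f`. -/
noncomputable def subst1 {σ : Type*} (f : PowerSeries R) (G : MvPowerSeries σ R) :
    MvPowerSeries σ R :=
  fun d =>
    ∑ n ∈ Finset.range ((d.sum fun _ k => k) + 1),
      PowerSeries.coeff n f * MvPowerSeries.coeff d (G ^ n)

/-- Composition `f(g)` of one-variable power series (`g` with zero constant term). -/
noncomputable def pcomp (f g : PowerSeries R) : PowerSeries R := subst1 f g

/-- A formal group law over `R`: a two-variable power series `F(X,Y)` with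
`F(X,0) = X`, `F(0,Y) = Y`, `F(X,Y) = F(Y,X)` and `F(F(X,Y),Z) = F(X,F(Y,Z))`. -/
structure IsFGL (F : MvPowerSeries (Fin 2) R) : Prop where
  unit_left : subst2 F (MvPowerSeries.X 0) 0 = MvPowerSeries.X 0
  unit_right : subst2 F 0 (MvPowerSeries.X 1) = MvPowerSeries.X 1
  comm : subst2 F (MvPowerSeries.X 1) (MvPowerSeries.X 0) = F
  assoc : subst2 F (subst2 F (MvPowerSeries.X 0) (MvPowerSeries.X 1))
        (MvPowerSeries.X 2 : MvPowerSeries (Fin 3) R)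
      = subst2 F (MvPowerSeries.X 0) (subst2 F (MvPowerSeries.X 1) (MvPowerSeries.X 2))

/-- A homomorphism `f : F → G` of formal group laws: a one-variable power series with
zero constant term such that `f(F(X,Y)) = G(f(X), f(Y))`. -/
structure IsHom (F G : MvPowerSeries (Fin 2) R) (f : PowerSeries R) : Prop where
  const : PowerSeries.constantCoeff f = 0
  hom : subst1 f F =
    subst2 G (subst1 f (MvPowerSeries.X 0)) (subst1 f (MvPowerSeries.X 1))

/-- The coefficientwise Frobenius twist `F^{(p)}`. -/
noncomputable def frob (p : ℕ) (F : MvPowerSeries (Fin 2) R) : MvPowerSeries (Fin 2) R :=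
  fun d => (MvPowerSeries.coeff d F) ^ p

/-- The one-variable power series `F_Y(X,0)`, whose coefficient of `X^n` is the
coefficient of `X^n Y` in `F`. -/
noncomputable def FY0 (F : MvPowerSeries (Fin 2) R) : PowerSeries R :=
  PowerSeries.mk fun n =>
    MvPowerSeries.coeff (Finsupp.single 0 n + Finsupp.single 1 1) F

/-- The formal partial derivative `F_X(X,Y)` with respect to the first variable. -/
noncomputable def FX (F : MvPowerSeries (Fin 2) R) : MvPowerSeries (Fin 2) R :=
  fun d => ((d 0 + 1 : ℕ) : R) * MvPowerSeries.coeff (d + Finsupp.single 0 1) F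

/-- The `n`-series `[n]_F` of a formal group law, defined by `[0]_F = 0` and
`[n+1]_F(X) = F([n]_F(X), X)`. -/
noncomputable def nSeries (F : MvPowerSeries (Fin 2) R) : ℕ → PowerSeries R
  | 0 => 0
  | n + 1 => subst2 F (nSeries F n) PowerSeries.X

section Aux

variable {R : Type*} [CommRing R]

lemma coeff_subst2' {σ : Type*} (F : MvPowerSeries (Fin 2) R)
    (a b : MvPowerSeries σ R) (d : σ →₀ ℕ) :
    MvPowerSeries.coeff d (subst2 F a b) =
    ∑ ij ∈ Finset.range ((d.sum fun _ k => k) + 1) ×ˢ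
        Finset.range ((d.sum fun _ k => k) + 1),
      MvPowerSeries.coeff (Finsupp.single 0 ij.1 + Finsupp.single 1 ij.2) F *
        MvPowerSeries.coeff d (a ^ ij.1 * b ^ ij.2) := rfl

lemma coeff_subst1' {σ : Type*} (f : PowerSeries R) (G : MvPowerSeries σ R) (d : σ →₀ ℕ) :
    MvPowerSeries.coeff d (subst1 f G) =
    ∑ n ∈ Finset.range ((d.sum fun _ k => k) + 1),
      PowerSeries.coeff n f * MvPowerSeries.coeff d (G ^ n) := rfl

/-- Local degree function. -/
noncomputable def deg {σ : Type*} (e : σ →₀ ℕ) : ℕ := e.sum fun _ k => k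

lemma deg_add {σ : Type*} (a b : σ →₀ ℕ) : deg (a + b) = deg a + deg b :=
  Finsupp.sum_add_index' (fun _ => rfl) (fun _ _ _ => rfl)

lemma deg_single {σ : Type*} (s : σ) (n : ℕ) : deg (Finsupp.single s n) = n :=
  Finsupp.sum_single_index rfl

lemma deg_zero {σ : Type*} : deg (0 : σ →₀ ℕ) = 0 := rfl

/-- `deg` as an additive monoid hom. -/
noncomputable def degHom (σ : Type*) : (σ →₀ ℕ) →+ ℕ where
  toFun := deg
  map_zero' := deg_zero
  map_add' := deg_add

lemma deg2 (e : Fin 2 →₀ ℕ) : deg e = e 0 + e 1 := by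
  rw [deg, Finsupp.sum_fintype _ _ (fun _ => rfl), Fin.sum_univ_two]

lemma fin2_eq (e : Fin 2 →₀ ℕ) :
    e = Finsupp.single 0 (e 0) + Finsupp.single 1 (e 1) := by
  ext i; fin_cases i <;> simp [Finsupp.single_apply]

lemma deg2_eq_zero {e : Fin 2 →₀ ℕ} (h : deg e = 0) : e = 0 := by
  rw [deg2] at h
  rw [fin2_eq e]
  have h0 : e 0 = 0 := by omega
  have h1 : e 1 = 0 := by omega
  simp [h0, h1]

lemma unitl_coeff (F : MvPowerSeries (Fin 2) R)
    (h : subst2 F (MvPowerSeries.X 0) 0 = (MvPowerSeries.X 0 : MvPowerSeries ℕ R)) (m : ℕ) :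
    MvPowerSeries.coeff (Finsupp.single 0 m) F = if m = 1 then 1 else 0 := by
  classical
  have h' := congrArg (MvPowerSeries.coeff (Finsupp.single 0 m)) h
  rw [coeff_subst2'] at h'
  have hd : (((Finsupp.single 0 m : ℕ →₀ ℕ)).sum fun _ k => k) = m := deg_single _ _
  rw [hd, Finset.sum_product] at h'
  have h1 : ∀ i ∈ Finset.range (m+1),
      (∑ j ∈ Finset.range (m+1),
        MvPowerSeries.coeff (Finsupp.single 0 i + Finsupp.single 1 j) F *
          MvPowerSeries.coeff (Finsupp.single 0 m)
            ((MvPowerSeries.X 0 : MvPowerSeries ℕ R) ^ i *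
              (0 : MvPowerSeries ℕ R) ^ j))
      = MvPowerSeries.coeff (Finsupp.single 0 i) F *
          (if (Finsupp.single 0 m : ℕ →₀ ℕ) = Finsupp.single 0 i then 1 else 0) := by
    intro i _
    rw [Finset.sum_eq_single 0]
    · simp [MvPowerSeries.coeff_X_pow]
    · intro j _ hj
      rw [zero_pow hj, mul_zero, map_zero, mul_zero]
    · intro hmem; exact absurd (Finset.mem_range.mpr (Nat.succ_pos m)) hmem
  rw [Finset.sum_congr rfl h1, Finset.sum_eq_single m] at h'
  · rw [if_pos rfl, mul_one] at h'
    rw [h', ← pow_one (MvPowerSeries.X 0 : MvPowerSeries ℕ R),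
      MvPowerSeries.coeff_X_pow]
    simp [(Finsupp.single_injective (0 : ℕ)).eq_iff]
  · intro i _ hi
    rw [if_neg fun e => hi ((Finsupp.single_injective (0 : ℕ)) e).symm, mul_zero]
  · intro hmem; exact absurd (Finset.mem_range.mpr (Nat.lt_succ_self m)) hmem

lemma unitr_coeff (F : MvPowerSeries (Fin 2) R)
    (h : subst2 F 0 (MvPowerSeries.X 1) = (MvPowerSeries.X 1 : MvPowerSeries ℕ R)) (m : ℕ) :
    MvPowerSeries.coeff (Finsupp.single 1 m) F = if m = 1 then 1 else 0 := by
  classical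
  have h' := congrArg (MvPowerSeries.coeff (Finsupp.single 1 m)) h
  rw [coeff_subst2'] at h'
  have hd : (((Finsupp.single 1 m : ℕ →₀ ℕ)).sum fun _ k => k) = m := deg_single _ _
  rw [hd, Finset.sum_product] at h'
  have h1 : ∀ i ∈ Finset.range (m+1),
      (∑ j ∈ Finset.range (m+1),
        MvPowerSeries.coeff (Finsupp.single 0 i + Finsupp.single 1 j) F *
          MvPowerSeries.coeff (Finsupp.single 1 m)
            ((0 : MvPowerSeries ℕ R) ^ i *
              (MvPowerSeries.X 1 : MvPowerSeries ℕ R) ^ j))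
      = if i = 0 then MvPowerSeries.coeff (Finsupp.single 1 m) F else 0 := by
    intro i _
    split_ifs with hi
    · subst hi
      rw [Finset.sum_eq_single m]
      · simp [MvPowerSeries.coeff_X_pow]
      · intro j _ hj
        rw [pow_zero, one_mul, MvPowerSeries.coeff_X_pow,
          if_neg fun e => hj (((Finsupp.single_injective (1 : ℕ)) e).symm), mul_zero]
      · intro hmem; exact absurd (Finset.mem_range.mpr (Nat.lt_succ_self m)) hmem
    · apply Finset.sum_eq_zero
      intro j _
      rw [zero_pow hi, zero_mul, map_zero, mul_zero]
  rw [Finset.sum_congr rfl h1, Finset.sum_ite_eq' (Finset.range (m+1)) 0] at h'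
  rw [if_pos (Finset.mem_range.mpr (Nat.succ_pos m))] at h'
  rw [h', ← pow_one (MvPowerSeries.X 1 : MvPowerSeries ℕ R),
    MvPowerSeries.coeff_X_pow]
  simp [(Finsupp.single_injective (1 : ℕ)).eq_iff]

/-- Powers of series agreeing in degrees `≤ 1` (with zero constant term) agree in
the coefficient of a monomial whose degree equals the exponent. -/
lemma coeff_pow_eq_of_low (A B : MvPowerSeries (Fin 2) R)
    (hAB : ∀ e, deg e ≤ 1 → MvPowerSeries.coeff e A = MvPowerSeries.coeff e B)
    (h0 : MvPowerSeries.coeff 0 A = 0)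
    {n : ℕ} {d : Fin 2 →₀ ℕ} (hd : deg d = n) :
    MvPowerSeries.coeff d (A ^ n) = MvPowerSeries.coeff d (B ^ n) := by
  classical
  rw [MvPowerSeries.coeff_pow, MvPowerSeries.coeff_pow]
  apply Finset.sum_congr rfl
  intro l hl
  rw [Finset.mem_finsuppAntidiag] at hl
  by_cases hz : ∃ i ∈ Finset.range n, l i = 0
  · obtain ⟨i, hi, hli⟩ := hz
    rw [Finset.prod_eq_zero hi, Finset.prod_eq_zero hi]
    · rw [hli, ← hAB 0 (by rw [deg_zero]; omega), h0]
    · rw [hli, h0]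
  · push_neg at hz
    have hone : ∀ i ∈ Finset.range n, 1 ≤ deg (l i) := by
      intro i hi
      rcases Nat.eq_zero_or_pos (deg (l i)) with h|h
      · exact absurd (deg2_eq_zero h) (hz i hi)
      · exact h
    have hsum : ∑ i ∈ Finset.range n, deg (l i) = n := by
      have := map_sum (degHom (Fin 2)) l (Finset.range n)
      rw [hl.1] at this
      exact this.symm.trans hd
    have hdeg1 : ∀ i ∈ Finset.range n, deg (l i) = 1 := by
      intro i hi
      by_contra hne
      have hlt := Finset.sum_lt_sum (f := fun _ : ℕ => 1) (g := fun i => deg (l i))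
        hone ⟨i, hi, show (1:ℕ) < deg (l i) by have := hone i hi; omega⟩
      rw [hsum, Finset.sum_const, Finset.card_range, smul_eq_mul, mul_one] at hlt
      omega
    exact Finset.prod_congr rfl fun i hi => hAB (l i) (le_of_eq (hdeg1 i hi))

lemma coeff_addXY (n : ℕ) (hn : 1 ≤ n) :
    MvPowerSeries.coeff (Finsupp.single 0 (n-1) + Finsupp.single 1 1)
      (((MvPowerSeries.X 0 : MvPowerSeries (Fin 2) R) + MvPowerSeries.X 1) ^ n)
      = (n : R) := by
  classical
  rw [add_pow, map_sum, Finset.sum_eq_single (n-1)]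
  · rw [MvPowerSeries.X_pow_eq, MvPowerSeries.X_pow_eq, MvPowerSeries.monomial_mul_monomial,
      one_mul, show ((n.choose (n-1) : ℕ) : MvPowerSeries (Fin 2) R)
        = MvPowerSeries.C (σ := Fin 2) (R := R) ((n.choose (n-1) : ℕ) : R) from
        (map_natCast (MvPowerSeries.C (σ := Fin 2) (R := R)) _).symm,
      MvPowerSeries.coeff_mul_C, MvPowerSeries.coeff_monomial,
      if_pos (by rw [show n - (n-1) = 1 from by omega]), one_mul]
    rw [Nat.choose_symm hn, Nat.choose_one_right]
  · intro k hk hkn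
    rw [MvPowerSeries.X_pow_eq, MvPowerSeries.X_pow_eq, MvPowerSeries.monomial_mul_monomial,
      one_mul, show ((n.choose k : ℕ) : MvPowerSeries (Fin 2) R)
        = MvPowerSeries.C (σ := Fin 2) (R := R) ((n.choose k : ℕ) : R) from
        (map_natCast (MvPowerSeries.C (σ := Fin 2) (R := R)) _).symm,
      MvPowerSeries.coeff_mul_C, MvPowerSeries.coeff_monomial, if_neg, zero_mul]
    intro he
    apply hkn
    have := DFunLike.congr_fun he 0
    simp [Finsupp.single_apply] at this
    omega
  · intro hmem
    exact absurd (Finset.mem_range.mpr (by omega)) hmem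

lemma coeff_pow_zero_of_var (u : MvPowerSeries (Fin 2) R) (s : Fin 2)
    (h : ∀ e, e s ≠ 0 → MvPowerSeries.coeff e u = 0) (i : ℕ) :
    ∀ e : Fin 2 →₀ ℕ, e s ≠ 0 → MvPowerSeries.coeff e (u ^ i) = 0 := by
  classical
  induction i with
  | zero =>
    intro e he
    rw [pow_zero, MvPowerSeries.coeff_one, if_neg]
    intro h0; exact he (by rw [h0]; rfl)
  | succ i ih =>
    intro e he
    rw [pow_succ, MvPowerSeries.coeff_mul]
    apply Finset.sum_eq_zero
    rintro ⟨p, q⟩ hpq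
    rw [Finset.HasAntidiagonal.mem_antidiagonal] at hpq
    by_cases hq : q s = 0
    · have hp : p s ≠ 0 := by
        have := DFunLike.congr_fun hpq s
        simp only [Finsupp.add_apply] at this
        omega
      rw [ih p hp, zero_mul]
    · rw [h q hq, mul_zero]

lemma coeff_pow_zero_low (A : MvPowerSeries (Fin 2) R)
    (h : ∀ e, deg e ≤ 1 → MvPowerSeries.coeff e A = 0)
    {j : ℕ} (hj : 1 ≤ j) (e : Fin 2 →₀ ℕ) (he : deg e ≤ 1) :
    MvPowerSeries.coeff e (A ^ j) = 0 := by
  classical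
  rw [MvPowerSeries.coeff_pow]
  apply Finset.sum_eq_zero
  intro l hl
  rw [Finset.mem_finsuppAntidiag] at hl
  have hsum : ∑ i ∈ Finset.range j, deg (l i) = deg e := by
    have := map_sum (degHom (Fin 2)) l (Finset.range j)
    rw [hl.1] at this
    exact this.symm
  have hex : ∃ i ∈ Finset.range j, deg (l i) ≤ 1 := by
    by_contra hz
    push_neg at hz
    have h2 : ∀ i ∈ Finset.range j, 2 ≤ deg (l i) := fun i hi => hz i hi
    have := Finset.sum_le_sum h2
    rw [hsum, Finset.sum_const, Finset.card_range, smul_eq_mul] at this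
    omega
  obtain ⟨i, hi, hdi⟩ := hex
  exact Finset.prod_eq_zero hi (h (l i) hdi)

end Aux

/-- Over a commutative `ℚ`-algebra, a homomorphism of formal group laws with vanishing
linear coefficient is zero. -/
theorem statement3 (R : Type*) [CommRing R] [Algebra ℚ R]
    (F G : MvPowerSeries (Fin 2) R) (hF : IsFGL F) (hG : IsFGL G)
    (f : PowerSeries R) (hf : IsHom F G f) (hf1 : PowerSeries.coeff 1 f = 0) :
    f = 0 := by
  classical
  have hc0 : PowerSeries.coeff 0 f = 0 := by
    rw [PowerSeries.coeff_zero_eq_constantCoeff]; exact hf.const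
  have hF0 : MvPowerSeries.coeff (0 : Fin 2 →₀ ℕ) F = 0 := by
    have h := unitl_coeff F hF.unit_left 0
    simpa using h
  have hFe0 : MvPowerSeries.coeff (Finsupp.single 0 1) F = 1 := by
    simpa using unitl_coeff F hF.unit_left 1
  have hFe1 : MvPowerSeries.coeff (Finsupp.single 1 1) F = 1 := by
    simpa using unitr_coeff F hF.unit_right 1
  have hne01 : (Finsupp.single 0 1 : Fin 2 →₀ ℕ) ≠ Finsupp.single 1 1 := by
    intro h; simpa using DFunLike.congr_fun h 0
  have hne0a : (0 : Fin 2 →₀ ℕ) ≠ Finsupp.single 0 1 := by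
    intro h; simpa using DFunLike.congr_fun h 0
  have hne0b : (0 : Fin 2 →₀ ℕ) ≠ Finsupp.single 1 1 := by
    intro h; simpa using DFunLike.congr_fun h 1
  have hlow : ∀ e : Fin 2 →₀ ℕ, deg e ≤ 1 →
      MvPowerSeries.coeff e F =
      MvPowerSeries.coeff e
        ((MvPowerSeries.X 0 : MvPowerSeries (Fin 2) R) + MvPowerSeries.X 1) := by
    intro e he
    rw [deg2] at he
    have hrep := fin2_eq e
    rcases Nat.lt_or_ge (e 0) 1 with h0 | h0
    · rcases Nat.lt_or_ge (e 1) 1 with h1 | h1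
      · have he0 : e = 0 := by
          rw [hrep, show e 0 = 0 by omega, show e 1 = 0 by omega]; simp
        rw [he0, hF0, map_add, MvPowerSeries.coeff_X, MvPowerSeries.coeff_X,
          if_neg hne0a, if_neg hne0b]
        ring
      · have he0 : e = Finsupp.single 1 1 := by
          rw [hrep, show e 0 = 0 by omega, show e 1 = 1 by omega]; simp
        rw [he0, hFe1, map_add, MvPowerSeries.coeff_X, MvPowerSeries.coeff_X,
          if_neg (Ne.symm hne01), if_pos rfl]
        ring
    · have he0 : e = Finsupp.single 0 1 := by
        rw [hrep, show e 0 = 1 by omega, show e 1 = 0 by omega]; simp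
      rw [he0, hFe0, map_add, MvPowerSeries.coeff_X, MvPowerSeries.coeff_X,
        if_pos rfl, if_neg hne01]
      ring
  have hu1 : ∀ e : Fin 2 →₀ ℕ, e 1 ≠ 0 →
      MvPowerSeries.coeff e (subst1 f (MvPowerSeries.X 0 : MvPowerSeries (Fin 2) R)) = 0 := by
    intro e he
    rw [coeff_subst1']
    apply Finset.sum_eq_zero
    intro k _
    rw [MvPowerSeries.coeff_X_pow, if_neg, mul_zero]
    intro hes
    apply he
    rw [hes]
    simp [Finsupp.single_apply]
  have hv0 : ∀ e : Fin 2 →₀ ℕ, e 0 ≠ 0 →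
      MvPowerSeries.coeff e (subst1 f (MvPowerSeries.X 1 : MvPowerSeries (Fin 2) R)) = 0 := by
    intro e he
    rw [coeff_subst1']
    apply Finset.sum_eq_zero
    intro k _
    rw [MvPowerSeries.coeff_X_pow, if_neg, mul_zero]
    intro hes
    apply he
    rw [hes]
    simp [Finsupp.single_apply]
  have hvlow : ∀ e : Fin 2 →₀ ℕ, deg e ≤ 1 →
      MvPowerSeries.coeff e (subst1 f (MvPowerSeries.X 1 : MvPowerSeries (Fin 2) R)) = 0 := by
    intro e he
    rw [coeff_subst1']
    apply Finset.sum_eq_zero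
    intro k hk
    have h2 : (e.sum fun _ j => j) ≤ 1 := he
    have h1 := Finset.mem_range.mp hk
    have hk1 : k ≤ 1 := by omega
    interval_cases k
    · rw [hc0, zero_mul]
    · rw [hf1, zero_mul]
  have key : ∀ n, PowerSeries.coeff n f = 0 := by
    intro n
    induction n using Nat.strong_induction_on with
    | _ n ih =>
      match n, ih with
      | 0, _ => exact hc0
      | 1, _ => exact hf1
      | (m+2), ih =>
        set d : Fin 2 →₀ ℕ := Finsupp.single 0 (m + 1) + Finsupp.single 1 1 with hdd
        have hds : (d.sum fun _ k => k) = m + 2 := by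
          show deg d = m + 2
          rw [hdd, deg_add, deg_single, deg_single]
        have heq := congrArg (MvPowerSeries.coeff d) hf.hom
        rw [coeff_subst1', coeff_subst2', hds, Finset.sum_range_succ] at heq
        have hpre : (∑ k ∈ Finset.range (m+2),
            PowerSeries.coeff k f * MvPowerSeries.coeff d (F ^ k)) = 0 :=
          Finset.sum_eq_zero fun k hk => by
            rw [ih k (Finset.mem_range.mp hk), zero_mul]
        rw [hpre, zero_add] at heq
        have hFn : MvPowerSeries.coeff d (F ^ (m+2)) = ((m+2 : ℕ) : R) := by
          rw [coeff_pow_eq_of_low F _ hlow hF0 (show deg d = m + 2 from hds)]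
          have h := coeff_addXY (R := R) (m+2) (by omega)
          rw [show (m+2) - 1 = m + 1 from rfl, ← hdd] at h
          exact h
        have hRHS : (∑ ij ∈ Finset.range (m+2+1) ×ˢ Finset.range (m+2+1),
            MvPowerSeries.coeff (Finsupp.single 0 ij.1 + Finsupp.single 1 ij.2) G *
              MvPowerSeries.coeff d
                ((subst1 f (MvPowerSeries.X 0 : MvPowerSeries (Fin 2) R)) ^ ij.1 *
                 (subst1 f (MvPowerSeries.X 1 : MvPowerSeries (Fin 2) R)) ^ ij.2)) = 0 := by
          apply Finset.sum_eq_zero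
          rintro ⟨i, j⟩ _
          have hz : MvPowerSeries.coeff d
              ((subst1 f (MvPowerSeries.X 0 : MvPowerSeries (Fin 2) R)) ^ i *
               (subst1 f (MvPowerSeries.X 1 : MvPowerSeries (Fin 2) R)) ^ j) = 0 := by
            rw [MvPowerSeries.coeff_mul]
            apply Finset.sum_eq_zero
            rintro ⟨p, q⟩ hpq
            rw [Finset.HasAntidiagonal.mem_antidiagonal] at hpq
            by_cases hp1 : p 1 = 0
            · by_cases hq0 : q 0 = 0
              · have hd1 : d 1 = 1 := by
                  rw [hdd]; simp [Finsupp.single_apply]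
                have hq1 : q 1 = 1 := by
                  have h := DFunLike.congr_fun hpq 1
                  simp only [Finsupp.add_apply] at h
                  rw [hd1] at h
                  omega
                have hq : q = Finsupp.single 1 1 := by
                  rw [fin2_eq q, hq0, hq1]; simp
                rcases Nat.eq_zero_or_pos j with hj | hj
                · rw [hj, pow_zero, hq, MvPowerSeries.coeff_one,
                    if_neg (by simp [Finsupp.single_eq_zero]), mul_zero]
                · rw [hq, coeff_pow_zero_low _ hvlow hj _ (by rw [deg_single]), mul_zero]
              · rw [coeff_pow_zero_of_var _ 0 hv0 j q hq0, mul_zero]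
            · rw [coeff_pow_zero_of_var _ 1 hu1 i p hp1, zero_mul]
          rw [hz, mul_zero]
        rw [hRHS, hFn] at heq
        have hunit : IsUnit ((m+2 : ℕ) : R) := by
          have h1 : ((m+2 : ℕ) : ℚ) ≠ 0 := Nat.cast_ne_zero.mpr (by omega)
          have h2 := (isUnit_iff_ne_zero.mpr h1).map (algebraMap ℚ R)
          rwa [map_natCast] at h2
        exact hunit.mul_right_cancel (heq.trans (zero_mul _).symm)
  ext n
  rw [key n, map_zero]


end FGL
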